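/- Let Y ∈ ℝ^{n×q}, X = [X₁, …, X_K] with X_k ∈ ℝ^{n×p_k}, λ > 0 and w_k > 0. The function (B, σ) ↦ (1/(2nqσ))‖Y − XB‖_F² + σ/2 + λ Σ_{k=1}^K w_k ‖B_k‖_* is jointly convex on the convex set ℝ^{p×q} × (0, ∞). -/

import Mathlib

open Matrix

noncomputable def frobInner {m n : ℕ} (A B : Matrix (Fin m) (Fin n) ℝ) : ℝ := (Aᵀ * B).trace

noncomputable def frobNorm {m n : ℕ} (A : Matrix (Fin m) (Fin n) ℝ) : ℝ := Real.sqrt (Aᵀ * A).trace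

open scoped ComplexOrder in
/-- The positive semidefinite square root of a positive semidefinite matrix (as in the older
Mathlib, where it was `Matrix.PosSemidef.sqrt`; removed since). -/
noncomputable def Matrix.PosSemidef.sqrt {n : Type*} [Fintype n] [DecidableEq n] {𝕜 : Type*} [RCLike 𝕜]
    {A : Matrix n n 𝕜} (hA : A.PosSemidef) : Matrix n n 𝕜 :=
  hA.1.eigenvectorUnitary.1 * diagonal ((↑) ∘ (√·) ∘ hA.1.eigenvalues) *
  (star hA.1.eigenvectorUnitary : Matrix n n 𝕜)

noncomputable def nucNorm {m n : ℕ} (A : Matrix (Fin m) (Fin n) ℝ) : ℝ :=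
  (Matrix.posSemidef_conjTranspose_mul_self A).sqrt.trace

noncomputable def opNorm {m n : ℕ} (A : Matrix (Fin m) (Fin n) ℝ) : ℝ :=
  ‖LinearMap.toContinuousLinearMap (Matrix.toEuclideanLin A)‖

section Aux
open Finset

variable {m n : ℕ}

lemma quadId (M : Matrix (Fin m) (Fin n) ℝ) (x : Fin n → ℝ) :
    (M *ᵥ x) ⬝ᵥ (M *ᵥ x) = x ⬝ᵥ ((Mᵀ * M) *ᵥ x) := by
  conv_rhs => rw [← mulVec_mulVec, dotProduct_mulVec, vecMul_transpose]

lemma nucNorm_eq_sum (A : Matrix (Fin m) (Fin n) ℝ) :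
    nucNorm A = ∑ j, Real.sqrt ((posSemidef_conjTranspose_mul_self A).1.eigenvalues j) := by
  unfold nucNorm
  rw [Matrix.PosSemidef.sqrt, trace_mul_cycle]
  rw [show (star ((posSemidef_conjTranspose_mul_self A).1.eigenvectorUnitary : Matrix (Fin n) (Fin n) ℝ)) *
      ((posSemidef_conjTranspose_mul_self A).1.eigenvectorUnitary : Matrix (Fin n) (Fin n) ℝ) = 1 from
      Unitary.coe_star_mul_self _]
  simp [Matrix.trace, Matrix.diag]

lemma dual_le (A M : Matrix (Fin m) (Fin n) ℝ)
    (hM : ∀ x : Fin n → ℝ, (M *ᵥ x) ⬝ᵥ (M *ᵥ x) ≤ x ⬝ᵥ x) :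
    (Mᵀ * A).trace ≤ nucNorm A := by
  set hS := posSemidef_conjTranspose_mul_self A with hSdef
  set V : Matrix (Fin n) (Fin n) ℝ := (hS.1.eigenvectorUnitary : Matrix (Fin n) (Fin n) ℝ) with hVdef
  set μ : Fin n → ℝ := hS.1.eigenvalues with hμdef
  have hVV : Vᵀ * V = 1 := Unitary.coe_star_mul_self hS.1.eigenvectorUnitary
  have hVVt : V * Vᵀ = 1 := Unitary.coe_mul_star_self hS.1.eigenvectorUnitary
  have hdiag : Vᵀ * (Aᵀ * A) * V = diagonal μ := by
    have := hS.1.conjStarAlgAut_star_eigenvectorUnitary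
    simp [Matrix.star_eq_conjTranspose] at this
    exact (this :)
  have htr : (Mᵀ * A).trace = ∑ j, ∑ i, (M * V) i j * (A * V) i j := by
    have h0 : ((M * V)ᵀ * (A * V)).trace = (Mᵀ * A).trace := by
      rw [transpose_mul, trace_mul_cycle, Matrix.mul_assoc A V Vᵀ, hVVt, Matrix.mul_one, trace_mul_comm]
    rw [← h0, Matrix.trace]
    simp [Matrix.diag, Matrix.mul_apply, mul_comm]
  rw [htr, nucNorm_eq_sum]
  apply Finset.sum_le_sum
  intro j _
  have hz : ∑ i, (A * V) i j ^ 2 = μ j := by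
    have h1 : ((A * V)ᵀ * (A * V)) j j = μ j := by
      rw [transpose_mul, ← Matrix.mul_assoc, Matrix.mul_assoc Vᵀ Aᵀ A, hdiag]
      simp
    rw [← h1, Matrix.mul_apply]
    simp [sq]
  have hu : ∑ i, (M * V) i j ^ 2 ≤ 1 := by
    have h2 := hM (fun l => V l j)
    have hl : (M *ᵥ fun l => V l j) = fun i => (M * V) i j := by
      funext i; simp [Matrix.mulVec, Matrix.mul_apply, dotProduct]
    have hr : (fun l => V l j : Fin n → ℝ) ⬝ᵥ (fun l => V l j) = (1 : ℝ) := by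
      have h3 : (Vᵀ * V) j j = 1 := by rw [hVV]; simp
      rw [← h3, Matrix.mul_apply]
      simp [dotProduct]
    rw [hl, hr] at h2
    simpa [dotProduct, sq] using h2
  calc ∑ i, (M * V) i j * (A * V) i j
      ≤ Real.sqrt (∑ i, (M * V) i j ^ 2) * Real.sqrt (∑ i, (A * V) i j ^ 2) :=
        Real.sum_mul_le_sqrt_mul_sqrt _ _ _
    _ ≤ 1 * Real.sqrt (μ j) := by
        rw [hz]
        have h4 : Real.sqrt (∑ i, (M * V) i j ^ 2) ≤ 1 := by
          simpa using Real.sqrt_le_sqrt hu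
        exact mul_le_mul_of_nonneg_right h4 (Real.sqrt_nonneg _)
    _ = Real.sqrt (μ j) := one_mul _

lemma dual_attain (A : Matrix (Fin m) (Fin n) ℝ) :
    ∃ M : Matrix (Fin m) (Fin n) ℝ,
      (∀ x : Fin n → ℝ, (M *ᵥ x) ⬝ᵥ (M *ᵥ x) ≤ x ⬝ᵥ x) ∧ (Mᵀ * A).trace = nucNorm A := by
  set hS := posSemidef_conjTranspose_mul_self A with hSdef
  set V : Matrix (Fin n) (Fin n) ℝ := (hS.1.eigenvectorUnitary : Matrix (Fin n) (Fin n) ℝ) with hVdef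
  set μ : Fin n → ℝ := hS.1.eigenvalues with hμdef
  have hμ0 : ∀ j, 0 ≤ μ j := hS.eigenvalues_nonneg
  have hVV : Vᵀ * V = 1 := Unitary.coe_star_mul_self hS.1.eigenvectorUnitary
  have hVVt : V * Vᵀ = 1 := Unitary.coe_mul_star_self hS.1.eigenvectorUnitary
  have hdiag : Vᵀ * (Aᵀ * A) * V = diagonal μ := by
    have := hS.1.conjStarAlgAut_star_eigenvectorUnitary
    simp [Matrix.star_eq_conjTranspose] at this
    exact (this :)
  have hAA : Aᵀ * A = V * diagonal μ * Vᵀ := by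
    rw [← hdiag]
    calc Aᵀ * A = (V * Vᵀ) * (Aᵀ * A) * (V * Vᵀ) := by
          rw [hVVt, Matrix.one_mul, Matrix.mul_one]
      _ = V * (Vᵀ * (Aᵀ * A) * V) * Vᵀ := by simp only [Matrix.mul_assoc]
  set g : Fin n → ℝ := fun j => (Real.sqrt (μ j))⁻¹ with hgdef
  set P : Matrix (Fin n) (Fin n) ℝ := V * diagonal g * Vᵀ with hPdef
  have hPsym : Pᵀ = P := by
    rw [hPdef, transpose_mul, transpose_mul, transpose_transpose, diagonal_transpose,
      Matrix.mul_assoc]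
  set M : Matrix (Fin m) (Fin n) ℝ := A * P with hMdef
  have hMT : Mᵀ = P * Aᵀ := by rw [hMdef, transpose_mul, hPsym]
  have hMTA : Mᵀ * A = V * diagonal (fun j => g j * μ j) * Vᵀ := by
    calc Mᵀ * A = P * (Aᵀ * A) := by rw [hMT, Matrix.mul_assoc]
      _ = (V * diagonal g) * ((Vᵀ * V) * (diagonal μ * Vᵀ)) := by
          rw [hAA, hPdef]; simp only [Matrix.mul_assoc]
      _ = (V * diagonal g) * (diagonal μ * Vᵀ) := by rw [hVV, Matrix.one_mul]
      _ = V * (diagonal g * diagonal μ) * Vᵀ := by simp only [Matrix.mul_assoc]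
      _ = V * diagonal (fun j => g j * μ j) * Vᵀ := by rw [diagonal_mul_diagonal]
  have hgμ : ∀ j, g j * μ j = Real.sqrt (μ j) := by
    intro j
    rcases eq_or_lt_of_le (hμ0 j) with h | h
    · simp [hgdef, ← h]
    · have hs : 0 < Real.sqrt (μ j) := Real.sqrt_pos.mpr h
      rw [hgdef]
      field_simp
      exact (Real.sq_sqrt h.le).symm
  refine ⟨M, ?_, ?_⟩
  · -- contraction property
    have hMTM : Mᵀ * M = V * diagonal (fun j => g j * μ j * g j) * Vᵀ := by
      calc Mᵀ * M = (Mᵀ * A) * P := by rw [hMdef, Matrix.mul_assoc]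
        _ = (V * diagonal (fun j => g j * μ j)) * ((Vᵀ * V) * (diagonal g * Vᵀ)) := by
            rw [hMTA, hPdef]; simp only [Matrix.mul_assoc]
        _ = (V * diagonal (fun j => g j * μ j)) * (diagonal g * Vᵀ) := by
            rw [hVV, Matrix.one_mul]
        _ = V * (diagonal (fun j => g j * μ j) * diagonal g) * Vᵀ := by
            simp only [Matrix.mul_assoc]
        _ = V * diagonal (fun j => g j * μ j * g j) * Vᵀ := by rw [diagonal_mul_diagonal]
    intro x
    rw [quadId, hMTM]
    set y : Fin n → ℝ := Vᵀ *ᵥ x with hydef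
    have hVexp : (V * diagonal (fun j => g j * μ j * g j) * Vᵀ) *ᵥ x
        = V *ᵥ (diagonal (fun j => g j * μ j * g j) *ᵥ y) := by
      rw [← mulVec_mulVec, ← mulVec_mulVec]
    have hdot : x ⬝ᵥ (V *ᵥ (diagonal (fun j => g j * μ j * g j) *ᵥ y))
        = y ⬝ᵥ (diagonal (fun j => g j * μ j * g j) *ᵥ y) := by
      rw [dotProduct_mulVec, ← mulVec_transpose]
    rw [hVexp, hdot]
    have hyy : y ⬝ᵥ y = x ⬝ᵥ x := by
      rw [hydef, quadId, transpose_transpose, hVVt, Matrix.one_mulVec]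
    have hbound : y ⬝ᵥ (diagonal (fun j => g j * μ j * g j) *ᵥ y) ≤ y ⬝ᵥ y := by
      simp only [dotProduct, mulVec_diagonal]
      apply Finset.sum_le_sum
      intro j _
      have he1 : g j * μ j * g j ≤ 1 := by
        rcases eq_or_lt_of_le (hμ0 j) with h | h
        · simp [← h]
        · have hs : 0 < Real.sqrt (μ j) := Real.sqrt_pos.mpr h
          rw [hgμ j]
          simp only [hgdef]
          rw [mul_inv_cancel₀ hs.ne']
      have he0 : 0 ≤ g j * μ j * g j := by
        rw [hgμ j]; positivity
      calc y j * (g j * μ j * g j * y j) = (g j * μ j * g j) * (y j * y j) := by ring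
        _ ≤ 1 * (y j * y j) := by
            apply mul_le_mul_of_nonneg_right he1 (mul_self_nonneg _)
        _ = y j * y j := one_mul _
    calc y ⬝ᵥ (diagonal (fun j => g j * μ j * g j) *ᵥ y) ≤ y ⬝ᵥ y := hbound
      _ = x ⬝ᵥ x := hyy
  · -- value
    rw [hMTA, trace_mul_cycle, hVV, Matrix.one_mul, trace_diagonal, nucNorm_eq_sum]
    exact Finset.sum_congr rfl fun j _ => hgμ j

lemma nucNorm_comb (A B : Matrix (Fin m) (Fin n) ℝ) {a b : ℝ} (ha : 0 ≤ a) (hb : 0 ≤ b) :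
    nucNorm (a • A + b • B) ≤ a * nucNorm A + b * nucNorm B := by
  obtain ⟨M, hM, hMeq⟩ := dual_attain (a • A + b • B)
  have hA := dual_le A M hM
  have hB := dual_le B M hM
  rw [← hMeq]
  have hexp : Mᵀ * (a • A + b • B) = a • (Mᵀ * A) + b • (Mᵀ * B) := by
    rw [Matrix.mul_add, Matrix.mul_smul, Matrix.mul_smul]
  rw [hexp, trace_add, trace_smul, trace_smul, smul_eq_mul, smul_eq_mul]
  exact add_le_add (mul_le_mul_of_nonneg_left hA ha) (mul_le_mul_of_nonneg_left hB hb)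

noncomputable def matToEuc (C : Matrix (Fin m) (Fin n) ℝ) : EuclideanSpace ℝ (Fin m × Fin n) :=
  (WithLp.equiv 2 _).symm (fun p => C p.1 p.2)

lemma frobNorm_eq_norm (C : Matrix (Fin m) (Fin n) ℝ) :
    frobNorm C = ‖matToEuc C‖ := by
  rw [frobNorm, EuclideanSpace.norm_eq]
  congr 1
  rw [Matrix.trace]
  simp only [matToEuc, WithLp.equiv_symm_apply, PiLp.toLp_apply, Matrix.diag, Matrix.mul_apply,
    transpose_apply, Real.norm_eq_abs, sq_abs, Fintype.sum_prod_type, sq, abs_mul_abs_self]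
  rw [Finset.sum_comm]

lemma frobNorm_nonneg (C : Matrix (Fin m) (Fin n) ℝ) : 0 ≤ frobNorm C := Real.sqrt_nonneg _

lemma frobNorm_comb (U W : Matrix (Fin m) (Fin n) ℝ) {a b : ℝ} (ha : 0 ≤ a) (hb : 0 ≤ b) :
    frobNorm (a • U + b • W) ≤ a * frobNorm U + b * frobNorm W := by
  rw [frobNorm_eq_norm, frobNorm_eq_norm, frobNorm_eq_norm]
  have hlin : matToEuc (a • U + b • W) = a • matToEuc U + b • matToEuc W := rfl
  rw [hlin]
  calc ‖a • matToEuc U + b • matToEuc W‖ ≤ ‖a • matToEuc U‖ + ‖b • matToEuc W‖ :=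
        norm_add_le _ _
    _ = a * ‖matToEuc U‖ + b * ‖matToEuc W‖ := by
        rw [norm_smul, norm_smul, Real.norm_eq_abs, Real.norm_eq_abs,
          abs_of_nonneg ha, abs_of_nonneg hb]

lemma persp {c σ τ a b r s : ℝ} (hc : 0 < c) (hσ : 0 < σ) (hτ : 0 < τ)
    (ha : 0 ≤ a) (hb : 0 ≤ b) (hab : a + b = 1) :
    (a * r + b * s) ^ 2 / (c * (a * σ + b * τ)) ≤ a * (r ^ 2 / (c * σ)) + b * (s ^ 2 / (c * τ)) := by
  have hb' : b = 1 - a := by linarith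
  subst hb'
  have h1a : (0:ℝ) ≤ 1 - a := hb
  have hd : 0 < a * σ + (1 - a) * τ := by
    have hmin : 0 < min σ τ := lt_min hσ hτ
    nlinarith [min_le_left σ τ, min_le_right σ τ]
  have hN : a * (r ^ 2 / (c * σ)) + (1 - a) * (s ^ 2 / (c * τ))
      = (a * r ^ 2 * τ + (1 - a) * s ^ 2 * σ) / (c * (σ * τ)) := by
    field_simp
  rw [hN, div_le_div_iff₀ (by positivity) (by positivity)]
  have key : (a * r + (1 - a) * s) ^ 2 * (σ * τ)
      ≤ (a * r ^ 2 * τ + (1 - a) * s ^ 2 * σ) * (a * σ + (1 - a) * τ) := by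
    nlinarith [mul_nonneg (mul_nonneg ha h1a) (sq_nonneg (r * τ - s * σ))]
  nlinarith [mul_le_mul_of_nonneg_left key hc.le]

end Aux

/-- Joint convexity of the scaled composite nuclear norm penalized objective
`(B, σ) ↦ (1/(2nqσ))‖Y − XB‖_F² + σ/2 + λ∑ₖ wₖ‖Bₖ‖_*` on `ℝ^{p×q} × (0, ∞)`. -/
theorem stmt_15 (n q K : ℕ) (hn : 0 < n) (hq : 0 < q) (p : Fin K → ℕ)
    (Y : Matrix (Fin n) (Fin q) ℝ)
    (X : ∀ k, Matrix (Fin n) (Fin (p k)) ℝ)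
    (lam : ℝ) (hlam : 0 < lam) (w : Fin K → ℝ) (hw : ∀ k, 0 < w k) :
    ConvexOn ℝ {x : (∀ k, Matrix (Fin (p k)) (Fin q) ℝ) × ℝ | 0 < x.2}
      (fun x =>
        (frobNorm (Y - ∑ k, X k * x.1 k)) ^ 2 / (2 * n * q * x.2) + x.2 / 2 +
          lam * ∑ k, w k * nucNorm (x.1 k)) := by
  have hc : (0:ℝ) < 2 * (n:ℝ) * (q:ℝ) :=
    mul_pos (mul_pos two_pos (by exact_mod_cast hn)) (by exact_mod_cast hq)
  constructor
  · -- convexity of the set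
    intro x hx y hy a b ha hb hab
    simp only [Set.mem_setOf_eq] at *
    show 0 < (a • x + b • y).2
    have hz : (a • x + b • y).2 = a * x.2 + b * y.2 := rfl
    rw [hz]
    have hmin : 0 < min x.2 y.2 := lt_min hx hy
    nlinarith [min_le_left x.2 y.2, min_le_right x.2 y.2]
  · intro x hx y hy a b ha hb hab
    simp only [Set.mem_setOf_eq] at hx hy
    set u : Matrix (Fin n) (Fin q) ℝ := Y - ∑ k, X k * x.1 k with hu
    set v : Matrix (Fin n) (Fin q) ℝ := Y - ∑ k, X k * y.1 k with hv
    have hcomp1 : ∀ k, (a • x + b • y).1 k = a • x.1 k + b • y.1 k := fun k => rfl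
    have hcomp2 : (a • x + b • y).2 = a * x.2 + b * y.2 := rfl
    have hres : Y - ∑ k, X k * ((a • x + b • y).1 k) = a • u + b • v := by
      have h1 : ∀ k ∈ Finset.univ, X k * ((a • x + b • y).1 k)
          = a • (X k * x.1 k) + b • (X k * y.1 k) := by
        intro k _
        rw [hcomp1, Matrix.mul_add, Matrix.mul_smul, Matrix.mul_smul]
      rw [Finset.sum_congr rfl h1, Finset.sum_add_distrib, ← Finset.smul_sum, ← Finset.smul_sum]
      rw [hu, hv]
      have hkey : a • (Y - ∑ k, X k * x.1 k) + b • (Y - ∑ k, X k * y.1 k)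
          = (a + b) • Y - (a • ∑ k, X k * x.1 k + b • ∑ k, X k * y.1 k) := by
        rw [add_smul, smul_sub, smul_sub]; abel
      rw [hkey, hab, one_smul]
    have hfrob : frobNorm (a • u + b • v) ≤ a * frobNorm u + b * frobNorm v :=
      frobNorm_comb u v ha hb
    have hsq : frobNorm (a • u + b • v) ^ 2 ≤ (a * frobNorm u + b * frobNorm v) ^ 2 :=
      pow_le_pow_left₀ (frobNorm_nonneg _) hfrob 2
    have hd : (0:ℝ) < 2 * (n:ℝ) * (q:ℝ) * (a * x.2 + b * y.2) := by
      have hmin : 0 < min x.2 y.2 := lt_min hx hy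
      have : 0 < a * x.2 + b * y.2 := by
        nlinarith [min_le_left x.2 y.2, min_le_right x.2 y.2]
      exact mul_pos hc this
    have h1 : frobNorm (Y - ∑ k, X k * ((a • x + b • y).1 k)) ^ 2
          / (2 * (n:ℝ) * (q:ℝ) * ((a • x + b • y).2))
        ≤ a * (frobNorm u ^ 2 / (2 * (n:ℝ) * (q:ℝ) * x.2))
          + b * (frobNorm v ^ 2 / (2 * (n:ℝ) * (q:ℝ) * y.2)) := by
      rw [hres, hcomp2]
      calc frobNorm (a • u + b • v) ^ 2 / (2 * (n:ℝ) * (q:ℝ) * (a * x.2 + b * y.2))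
          ≤ (a * frobNorm u + b * frobNorm v) ^ 2
            / (2 * (n:ℝ) * (q:ℝ) * (a * x.2 + b * y.2)) := by
            exact (div_le_div_iff_of_pos_right hd).mpr hsq
        _ ≤ a * (frobNorm u ^ 2 / (2 * (n:ℝ) * (q:ℝ) * x.2))
            + b * (frobNorm v ^ 2 / (2 * (n:ℝ) * (q:ℝ) * y.2)) := by
            have := persp (c := 2 * (n:ℝ) * (q:ℝ)) (σ := x.2) (τ := y.2)
              (r := frobNorm u) (s := frobNorm v) hc hx hy ha hb hab
            convert this using 3 <;> ring
    have h3 : lam * ∑ k, w k * nucNorm ((a • x + b • y).1 k)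
        ≤ a * (lam * ∑ k, w k * nucNorm (x.1 k)) + b * (lam * ∑ k, w k * nucNorm (y.1 k)) := by
      have hstep : ∀ k ∈ Finset.univ, w k * nucNorm ((a • x + b • y).1 k)
          ≤ w k * (a * nucNorm (x.1 k) + b * nucNorm (y.1 k)) := by
        intro k _
        rw [hcomp1]
        exact mul_le_mul_of_nonneg_left (nucNorm_comb _ _ ha hb) (hw k).le
      calc lam * ∑ k, w k * nucNorm ((a • x + b • y).1 k)
          ≤ lam * ∑ k, w k * (a * nucNorm (x.1 k) + b * nucNorm (y.1 k)) :=
            mul_le_mul_of_nonneg_left (Finset.sum_le_sum hstep) hlam.le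
        _ = a * (lam * ∑ k, w k * nucNorm (x.1 k))
            + b * (lam * ∑ k, w k * nucNorm (y.1 k)) := by
            simp only [Finset.mul_sum, ← Finset.sum_add_distrib]
            exact Finset.sum_congr rfl fun k _ => by ring
    simp only [smul_eq_mul]
    have h2 : (a • x + b • y).2 / 2 = a * (x.2 / 2) + b * (y.2 / 2) := by
      rw [hcomp2]; ring
    calc frobNorm (Y - ∑ k, X k * ((a • x + b • y).1 k)) ^ 2
          / (2 * (n:ℝ) * (q:ℝ) * ((a • x + b • y).2)) + (a • x + b • y).2 / 2
          + lam * ∑ k, w k * nucNorm ((a • x + b • y).1 k)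
        ≤ (a * (frobNorm u ^ 2 / (2 * (n:ℝ) * (q:ℝ) * x.2))
            + b * (frobNorm v ^ 2 / (2 * (n:ℝ) * (q:ℝ) * y.2)))
          + (a * (x.2 / 2) + b * (y.2 / 2))
          + (a * (lam * ∑ k, w k * nucNorm (x.1 k))
            + b * (lam * ∑ k, w k * nucNorm (y.1 k))) := by
          exact add_le_add (add_le_add h1 (le_of_eq h2)) h3
      _ = a * (frobNorm u ^ 2 / (2 * (n:ℝ) * (q:ℝ) * x.2) + x.2 / 2
            + lam * ∑ k, w k * nucNorm (x.1 k))
          + b * (frobNorm v ^ 2 / (2 * (n:ℝ) * (q:ℝ) * y.2) + y.2 / 2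
            + lam * ∑ k, w k * nucNorm (y.1 k)) := by ring
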